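/- (Composition law t_a ∘ t_b = t_{ab}.) Let A be an associative unital ring and let y, P, Q, R, S, P₁, Q₁, R₁, S₁ ∈ A. Assume that yR + S is a unit of A and that y(PR₁ + RS₁) + (QR₁ + SS₁) is a unit of A. Set y₁ = (yR + S)⁻¹(yP + Q). Then y₁R₁ + S₁ is a unit of A, and (y₁R₁ + S₁)⁻¹(y₁P₁ + Q₁) = (y(PR₁ + RS₁) + (QR₁ + SS₁))⁻¹ · (y(PP₁ + RQ₁) + (QP₁ + SQ₁)). -/

import Mathlib

/-- Composition law `t_a ∘ t_b = t_{ab}` for the noncommutative fractional-linear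
actions: with `y₁ = (y*R + S)⁻¹ * (y*P + Q)`, the element `y₁*R₁ + S₁` is a unit,
and `(y₁*R₁ + S₁)⁻¹ * (y₁*P₁ + Q₁)` equals the single fractional-linear expression
attached to the product matrix. -/
theorem t_comp_law {A : Type*} [Ring A]
    (y P Q R S P₁ Q₁ R₁ S₁ : A)
    (h₁ : IsUnit (y * R + S))
    (h₂ : IsUnit (y * (P * R₁ + R * S₁) + (Q * R₁ + S * S₁)))
    (y₁ : A) (hy₁ : y₁ = Ring.inverse (y * R + S) * (y * P + Q)) :
    IsUnit (y₁ * R₁ + S₁) ∧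
    Ring.inverse (y₁ * R₁ + S₁) * (y₁ * P₁ + Q₁) =
      Ring.inverse (y * (P * R₁ + R * S₁) + (Q * R₁ + S * S₁)) *
        (y * (P * P₁ + R * Q₁) + (Q * P₁ + S * Q₁)) := by
  have hay : (y * R + S) * y₁ = y * P + Q := by
    rw [hy₁, Ring.mul_inverse_cancel_left _ _ h₁]
  have key : (y * R + S) * (y₁ * R₁ + S₁)
      = y * (P * R₁ + R * S₁) + (Q * R₁ + S * S₁) := by
    rw [mul_add, ← mul_assoc, hay]
    simp only [mul_add, add_mul, mul_assoc]
    abel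
  have key2 : (y * R + S) * (y₁ * P₁ + Q₁)
      = y * (P * P₁ + R * Q₁) + (Q * P₁ + S * Q₁) := by
    rw [mul_add, ← mul_assoc, hay]
    simp only [mul_add, add_mul, mul_assoc]
    abel
  have hXeq : y₁ * R₁ + S₁ = Ring.inverse (y * R + S) *
      (y * (P * R₁ + R * S₁) + (Q * R₁ + S * S₁)) := by
    rw [← key, Ring.inverse_mul_cancel_left _ _ h₁]
  have hX : IsUnit (y₁ * R₁ + S₁) := by
    rw [hXeq]
    exact (isUnit_ringInverse.2 h₁).mul h₂
  refine ⟨hX, ?_⟩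
  rw [Ring.inverse_mul_eq_iff_eq_mul _ _ _ hX, hXeq, mul_assoc,
    Ring.mul_inverse_cancel_left _ _ h₂, ← key2,
    Ring.inverse_mul_cancel_left _ _ h₁]
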